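/- A monomial ∏_{j=0}^{N} x_j^{n_j} (with n_j ∈ ℕ) is fixed by every element of G if and only if b_i·(n_0/M_0 + n_1/M_1 + ⋯ + n_i/M_i) ∈ ℤ for all 0 ≤ i ≤ N (with the convention b_N = 1). -/

import Mathlib

open Finset MvPolynomial

/-- `Mf b i` is `M_i = lcm(b_{i-1}, b_i)`, with the convention `b_{-1} = 1`
(the convention `b_N = 1` is imposed as a hypothesis in the statements). -/
def Mf (b : ℕ → ℕ) (i : ℕ) : ℕ := Nat.lcm (if i = 0 then 1 else b (i - 1)) (b i)

/-- An LS-path of degree `r` over the totally ordered set `{0, …, N}` with bonds `b`: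
a function `π : {0,…,N} → ℚ` (modelled as `π : ℕ → ℚ` vanishing above `N`) with
nonnegative values, integrality `b_j·(π 0 + ⋯ + π j) ∈ ℤ` for all `0 ≤ j ≤ N-1`,
and total sum `π 0 + ⋯ + π N = r`. -/
def IsLSPath (N : ℕ) (b : ℕ → ℕ) (r : ℕ) (π : ℕ → ℚ) : Prop :=
  (∀ i, 0 ≤ π i) ∧ (∀ i, N < i → π i = 0) ∧
  (∀ j < N, ∃ k : ℤ, (b j : ℚ) * (∑ i ∈ Finset.range (j + 1), π i) = k) ∧
  (∑ i ∈ Finset.range (N + 1), π i = r)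

/-- `SuppLE π π'` says `max supp π ≤ min supp π'`:
every element of the support of `π` is `≤` every element of the support of `π'`. -/
def SuppLE (π π' : ℕ → ℚ) : Prop := ∀ i j, π i ≠ 0 → π' j ≠ 0 → i ≤ j

/-- The monomial `x^π = ∏_{i=0}^{N} x_i ^ (M_i · π i)` in `ℂ[x_0,…,x_N]`
(the exponents `M_i · π i` are nonnegative integers for an LS-path `π`). -/
noncomputable def xpow (N : ℕ) (b : ℕ → ℕ) (π : ℕ → ℚ) :
    MvPolynomial (Fin (N + 1)) ℂ :=
  MvPolynomial.monomial
    (Finsupp.equivFunOnFinite.symm fun i : Fin (N + 1) => ⌊(Mf b i : ℚ) * π i⌋₊) (1 : ℂ)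

/-- The discrete LS algebra over `(S, ≤, b)`: the `ℂ`-linear span in `ℂ[x_0,…,x_N]`
of the monomials `x^π`, with `π` ranging over all LS-paths of all degrees. -/
noncomputable def discreteLS (N : ℕ) (b : ℕ → ℕ) :
    Submodule ℂ (MvPolynomial (Fin (N + 1)) ℂ) :=
  Submodule.span ℂ {p | ∃ r π, IsLSPath N b r π ∧ p = xpow N b π}

/-- The degree-`r` graded component `A_r = span_ℂ {x^π : π an LS-path of degree r}`. -/
noncomputable def discreteLSdeg (N : ℕ) (b : ℕ → ℕ) (r : ℕ) :
    Submodule ℂ (MvPolynomial (Fin (N + 1)) ℂ) :=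
  Submodule.span ℂ {p | ∃ π, IsLSPath N b r π ∧ p = xpow N b π}

/-- The diagonal matrix `e_i = diag(ζ^{(M/M_0)b_i}, …, ζ^{(M/M_i)b_i}, 1, …, 1)`
in `GL_{N+1}(ℂ)`, where `M = lcm(b_0, …, b_{N-1})`. -/
noncomputable def eMat (N : ℕ) (b : ℕ → ℕ) (ζ : ℂ) (i : ℕ) :
    Matrix (Fin (N + 1)) (Fin (N + 1)) ℂ :=
  Matrix.diagonal fun j : Fin (N + 1) =>
    if (j : ℕ) ≤ i then ζ ^ ((Finset.range N).lcm b / Mf b (j : ℕ) * b i) else 1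

/-- The subgroup `G` of `GL_{N+1}(ℂ)` generated by `e_0, e_1, …, e_N`. -/
noncomputable def Ggrp (N : ℕ) (b : ℕ → ℕ) (ζ : ℂ) :
    Subgroup (Matrix (Fin (N + 1)) (Fin (N + 1)) ℂ)ˣ :=
  Subgroup.closure
    {u | ∃ i ≤ N, (u : Matrix (Fin (N + 1)) (Fin (N + 1)) ℂ) = eMat N b ζ i}

/-- The linear action of a matrix `g` on `ℂ[x_0,…,x_N]`: a diagonal matrix
`diag(d_0,…,d_N)` acts as the `ℂ`-algebra automorphism sending `x_j` to `d_j · x_j`. -/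
noncomputable def matAct (N : ℕ) (g : Matrix (Fin (N + 1)) (Fin (N + 1)) ℂ) :
    MvPolynomial (Fin (N + 1)) ℂ →ₐ[ℂ] MvPolynomial (Fin (N + 1)) ℂ :=
  MvPolynomial.aeval fun j : Fin (N + 1) =>
    ∑ k : Fin (N + 1), MvPolynomial.C (g j k) * MvPolynomial.X k

lemma matAct_one (N : ℕ) : matAct N 1 = AlgHom.id ℂ _ := by
  apply MvPolynomial.algHom_ext
  intro j
  simp [matAct, Matrix.one_apply, apply_ite (MvPolynomial.C (σ := Fin (N+1)) (R := ℂ)),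
    Finset.sum_ite_eq]

lemma matAct_mul (N : ℕ) (A B : Matrix (Fin (N + 1)) (Fin (N + 1)) ℂ) :
    (matAct N A).comp (matAct N B) = matAct N (B * A) := by
  apply MvPolynomial.algHom_ext
  intro j
  simp only [AlgHom.comp_apply, matAct, aeval_X, map_sum, map_mul, aeval_C, Matrix.mul_apply]
  simp only [Finset.mul_sum, Finset.sum_mul, algebraMap_eq]
  rw [Finset.sum_comm]
  congr 1; funext l
  exact Finset.sum_congr rfl fun k _ => by ring

lemma matAct_diag (N : ℕ) (d : Fin (N + 1) → ℂ) (s : Fin (N + 1) →₀ ℕ) :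
    matAct N (Matrix.diagonal d) (monomial s 1) = monomial s (∏ j, d j ^ s j) := by
  rw [matAct, aeval_monomial]
  have h1 : ∀ j : Fin (N+1), (∑ k : Fin (N + 1),
      MvPolynomial.C (Matrix.diagonal d j k) * MvPolynomial.X k) = C (d j) * X j := by
    intro j
    rw [Finset.sum_eq_single j]
    · simp [Matrix.diagonal]
    · intro k _ hk
      simp [Matrix.diagonal_apply, (Ne.symm hk : ¬ j = k)]
    · simp
  simp only [h1, map_one, one_mul]
  rw [monomial_eq, Finsupp.prod, Finsupp.prod]
  rw [show (∏ j : Fin (N+1), d j ^ s j) = ∏ j ∈ s.support, d j ^ s j from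
    (Finset.prod_subset (Finset.subset_univ _)
      (by intro x _ hx; simp [Finsupp.notMem_support_iff.mp hx])).symm]
  rw [map_prod, ← Finset.prod_mul_distrib]
  exact Finset.prod_congr rfl (fun x _ => by rw [mul_pow, map_pow])


/-- A monomial `∏_j x_j^{n_j}` is fixed by every element of `G` if and only if
`b_i·(n_0/M_0 + ⋯ + n_i/M_i) ∈ ℤ` for all `0 ≤ i ≤ N` (with the convention `b_N = 1`). -/
theorem stmt10 (N : ℕ) (hN : 1 ≤ N) (b : ℕ → ℕ) (hb : ∀ i < N, 0 < b i) (hbN : b N = 1)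
    (ζ : ℂ) (hζ : IsPrimitiveRoot ζ ((Finset.range N).lcm b)) (n : ℕ → ℕ) :
    (∀ u ∈ Ggrp N b ζ,
        matAct N (u : Matrix (Fin (N + 1)) (Fin (N + 1)) ℂ)
            (MvPolynomial.monomial
              (Finsupp.equivFunOnFinite.symm fun j : Fin (N + 1) => n j) (1 : ℂ))
          = MvPolynomial.monomial
              (Finsupp.equivFunOnFinite.symm fun j : Fin (N + 1) => n j) (1 : ℂ))
      ↔ ∀ i ≤ N, ∃ k : ℤ,
          (b i : ℚ) * (∑ j ∈ Finset.range (i + 1), (n j : ℚ) / (Mf b j : ℚ)) = k := by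
  set M := (Finset.range N).lcm b with hMdef
  set s : Fin (N + 1) →₀ ℕ := Finsupp.equivFunOnFinite.symm fun j : Fin (N + 1) => n j with hs
  set p : MvPolynomial (Fin (N + 1)) ℂ := MvPolynomial.monomial s (1 : ℂ) with hp
  have hM : 0 < M := by
    rw [Nat.pos_iff_ne_zero]
    intro h0
    rw [hMdef, Finset.lcm_eq_zero_iff] at h0
    simp only [Set.mem_image, Finset.mem_coe, Finset.mem_range] at h0
    obtain ⟨i, hi, hbi⟩ := h0
    exact (hb i hi).ne' hbi
  have hbpos : ∀ j ≤ N, 0 < b j := by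
    intro j hj
    rcases lt_or_eq_of_le hj with h | h
    · exact hb j h
    · rw [h, hbN]; exact one_pos
  have hMf_pos : ∀ j ≤ N, 0 < Mf b j := by
    intro j hj
    rw [Mf, Nat.pos_iff_ne_zero]
    apply Nat.lcm_ne_zero
    · split
      · exact one_ne_zero
      · exact (hb (j - 1) (by omega)).ne'
    · exact (hbpos j hj).ne'
  have hMf_dvd : ∀ j ≤ N, Mf b j ∣ M := by
    intro j hj
    rw [Mf]
    apply Nat.lcm_dvd
    · split
      · exact one_dvd _
      · exact Finset.dvd_lcm (Finset.mem_range.mpr (by omega))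
    · rcases lt_or_eq_of_le hj with h | h
      · exact Finset.dvd_lcm (Finset.mem_range.mpr h)
      · rw [h, hbN]; exact one_dvd _
  -- the exponent sum
  set E : ℕ → ℕ := fun i => ∑ j ∈ Finset.range (i + 1), M / Mf b j * b i * n j with hE
  have prod_eq : ∀ i ≤ N,
      (∏ j : Fin (N + 1), (if (j : ℕ) ≤ i then ζ ^ (M / Mf b (j : ℕ) * b i) else 1) ^ s j)
        = ζ ^ E i := by
    intro i hi
    have h1 : ∀ j : Fin (N + 1),
        (if (j : ℕ) ≤ i then ζ ^ (M / Mf b (j : ℕ) * b i) else 1) ^ s j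
          = ζ ^ (if (j : ℕ) ≤ i then M / Mf b (j : ℕ) * b i * n (j : ℕ) else 0) := by
      intro j
      have hsj : s j = n (j : ℕ) := by simp [hs]
      split
      · rw [hsj, ← pow_mul]
      · rw [pow_zero, one_pow]
    simp only [h1]
    rw [Finset.prod_pow_eq_pow_sum]
    congr 1
    rw [Fin.sum_univ_eq_sum_range (fun j : ℕ => if j ≤ i then M / Mf b j * b i * n j else 0)]
    rw [hE]
    rw [← Finset.sum_subset (Finset.range_subset_range.mpr (by omega) :
        Finset.range (i + 1) ⊆ Finset.range (N + 1))]
    · exact Finset.sum_congr rfl fun j hj => by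
        rw [if_pos (by simpa using Nat.lt_succ_iff.mp (Finset.mem_range.mp hj))]
    · intro x _ hx
      rw [if_neg (by simp at hx ⊢; omega)]
  have arith : ∀ i ≤ N, (M ∣ E i ↔ ∃ k : ℤ,
      (b i : ℚ) * (∑ j ∈ Finset.range (i + 1), (n j : ℚ) / (Mf b j : ℚ)) = k) := by
    intro i hi
    have key : ((E i : ℕ) : ℚ) / (M : ℚ)
        = (b i : ℚ) * (∑ j ∈ Finset.range (i + 1), (n j : ℚ) / (Mf b j : ℚ)) := by
      rw [hE]
      push_cast
      rw [Finset.sum_div, Finset.mul_sum]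
      refine Finset.sum_congr rfl fun j hj => ?_
      have hjN : j ≤ N := by
        have := Finset.mem_range.mp hj; omega
      have hMfj : (Mf b j : ℚ) ≠ 0 := Nat.cast_ne_zero.mpr (hMf_pos j hjN).ne'
      have hMq : (M : ℚ) ≠ 0 := Nat.cast_ne_zero.mpr hM.ne'
      rw [Nat.cast_div (hMf_dvd j hjN) hMfj]
      field_simp
    constructor
    · rintro ⟨c, hc⟩
      refine ⟨c, ?_⟩
      rw [← key, hc]
      push_cast
      rw [mul_comm, mul_div_assoc, div_self (Nat.cast_ne_zero.mpr hM.ne'), mul_one]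
    · rintro ⟨k, hk⟩
      rw [← key, div_eq_iff (Nat.cast_ne_zero.mpr hM.ne' : (M:ℚ) ≠ 0)] at hk
      have : (E i : ℤ) = k * M := by exact_mod_cast hk
      have hdvd : (M : ℤ) ∣ (E i : ℤ) := ⟨k, by rw [this]; ring⟩
      exact_mod_cast hdvd
  have fixed_iff : ∀ i ≤ N, (matAct N (eMat N b ζ i) p = p ↔ ∃ k : ℤ,
      (b i : ℚ) * (∑ j ∈ Finset.range (i + 1), (n j : ℚ) / (Mf b j : ℚ)) = k) := by
    intro i hi
    rw [eMat, hp, matAct_diag, ← hMdef, prod_eq i hi, monomial_eq_monomial_iff]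
    rw [← arith i hi, ← hζ.pow_eq_one_iff_dvd]
    constructor
    · rintro (⟨-, h⟩ | ⟨h, -⟩)
      · exact h
      · exact absurd h (pow_ne_zero _ (hζ.ne_zero hM.ne'))
    · intro h
      exact Or.inl ⟨rfl, h⟩
  constructor
  · intro h i hi
    have hζne : ζ ≠ 0 := hζ.ne_zero hM.ne'
    set d : Fin (N + 1) → ℂ := fun j =>
      if (j : ℕ) ≤ i then ζ ^ (M / Mf b (j : ℕ) * b i) else 1 with hd
    have hdne : ∀ j, d j ≠ 0 := by
      intro j; rw [hd]; dsimp only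
      split
      · exact pow_ne_zero _ hζne
      · exact one_ne_zero
    refine (fixed_iff i hi).mp ?_
    have hmul : Matrix.diagonal d * Matrix.diagonal (fun j => (d j)⁻¹) = 1 := by
      rw [Matrix.diagonal_mul_diagonal]
      rw [show (fun j => d j * (d j)⁻¹) = fun _ => (1:ℂ) from
        funext fun j => mul_inv_cancel₀ (hdne j)]
      exact Matrix.diagonal_one
    have hmul' : Matrix.diagonal (fun j => (d j)⁻¹) * Matrix.diagonal d = 1 := by
      rw [Matrix.diagonal_mul_diagonal]
      rw [show (fun j => (d j)⁻¹ * d j) = fun _ => (1:ℂ) from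
        funext fun j => inv_mul_cancel₀ (hdne j)]
      exact Matrix.diagonal_one
    set u : (Matrix (Fin (N + 1)) (Fin (N + 1)) ℂ)ˣ :=
      ⟨Matrix.diagonal d, Matrix.diagonal (fun j => (d j)⁻¹), hmul, hmul'⟩ with hu
    have huval : (u : Matrix (Fin (N + 1)) (Fin (N + 1)) ℂ) = eMat N b ζ i := rfl
    have := h u (Subgroup.subset_closure ⟨i, hi, huval⟩)
    rwa [huval] at this
  · intro h u hu
    simp only [Ggrp] at hu
    refine Subgroup.closure_induction
      (p := fun (v : (Matrix (Fin (N + 1)) (Fin (N + 1)) ℂ)ˣ) _ =>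
        matAct N (v : Matrix (Fin (N + 1)) (Fin (N + 1)) ℂ) p = p)
      ?_ ?_ ?_ ?_ hu
    · rintro x ⟨i, hi, hx⟩
      rw [hx]
      exact (fixed_iff i hi).mpr (h i hi)
    · show matAct N ((1 : (Matrix (Fin (N + 1)) (Fin (N + 1)) ℂ)ˣ) :
          Matrix (Fin (N + 1)) (Fin (N + 1)) ℂ) p = p
      rw [Units.val_one, matAct_one]; rfl
    · intro x y _ _ px py
      rw [Units.val_mul, ← matAct_mul, AlgHom.comp_apply, px, py]
    · intro x _ px
      have hinj : Function.Injective (matAct N (x : Matrix (Fin (N + 1)) (Fin (N + 1)) ℂ)) := by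
        intro a c hac
        have := congrArg (matAct N ((x⁻¹ : _ˣ) : Matrix (Fin (N + 1)) (Fin (N + 1)) ℂ)) hac
        rwa [← AlgHom.comp_apply, ← AlgHom.comp_apply, matAct_mul, ← Units.val_mul,
          mul_inv_cancel, Units.val_one, matAct_one, AlgHom.id_apply, AlgHom.id_apply] at this
      apply hinj
      rw [← AlgHom.comp_apply, matAct_mul, ← Units.val_mul, inv_mul_cancel, Units.val_one,
        matAct_one, AlgHom.id_apply, px]
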